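/- arXiv:1402.3949 — 3 statements merged into one kernel-verified Lean document; each statement's English description precedes it below -/
import Mathlib

section
/- The iterated generating function of the 2-type branching process satisfies, for all $n \geq 1$ and $s_1, s_2 \in [0,1)$: if $f_1(s_1,s_2) = \frac{1}{1+(1-s_1)\rho_1 + (1-s_2)\rho_2}$ and $f_n(s_1,s_2) = f_{n-1}(g^{(1)}(s_1,s_2), g^{(2)}(s_1,s_2))$ with $g^{(1)}(s_1,s_2) = \frac{q}{1-p_1 s_1 - p_2 s_2}$ and $g^{(2)}(s_1,s_2) = \frac{q s_1}{1-p_1 s_1 - p_2 s_2}$, then $f_n(s_1,s_2) = \frac{1+(1-s_1)a_{n-1}+(1-s_2)b_{n-1}}{1+(1-s_1)a_n+(1-s_2)b_n}$, where $(a_n,b_n) = (\rho_1,\rho_2)(M^{n-1}+\cdots+M+I)$, $(a_0,b_0)=(0,0)$, $\rho_i = p_i/q$, and $M = \begin{pmatrix} \rho_1 & \rho_2 \\ 1+\rho_1 & \rho_2 \end{pmatrix}$. -/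
theorem stmt7 (p1 p2 q : ℝ) (hp1 : 0 < p1) (hp1' : p1 < 1) (hp2 : 0 < p2) (hp2' : p2 < 1)
    (hq : 0 < q) (hq' : q < 1) (hsum : p1 + p2 + q = 1)
    (ρ1 ρ2 : ℝ) (hρ1 : ρ1 = p1 / q) (hρ2 : ρ2 = p2 / q)
    (M : Matrix (Fin 2) (Fin 2) ℝ) (hM : M = !![ρ1, ρ2; 1 + ρ1, ρ2])
    (ab : ℕ → Fin 2 → ℝ)
    (hab : ∀ n : ℕ, ab n = Matrix.vecMul ![ρ1, ρ2] (∑ i ∈ Finset.range n, M ^ i))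
    (g1 g2 : ℝ → ℝ → ℝ)
    (hg1 : ∀ s1 s2, g1 s1 s2 = q / (1 - p1 * s1 - p2 * s2))
    (hg2 : ∀ s1 s2, g2 s1 s2 = q * s1 / (1 - p1 * s1 - p2 * s2))
    (f : ℕ → ℝ → ℝ → ℝ)
    (hf1 : ∀ s1 s2, f 1 s1 s2 = 1 / (1 + (1 - s1) * ρ1 + (1 - s2) * ρ2))
    (hfrec : ∀ n : ℕ, 1 ≤ n → ∀ s1 s2, f (n + 1) s1 s2 = f n (g1 s1 s2) (g2 s1 s2)) :
    ∀ n : ℕ, 1 ≤ n → ∀ s1 ∈ Set.Ico (0:ℝ) 1, ∀ s2 ∈ Set.Ico (0:ℝ) 1,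
      f n s1 s2 = (1 + (1 - s1) * ab (n - 1) 0 + (1 - s2) * ab (n - 1) 1)
        / (1 + (1 - s1) * ab n 0 + (1 - s2) * ab n 1) := by
  have hq0 : q ≠ 0 := hq.ne'
  have hρ1pos : 0 < ρ1 := hρ1 ▸ div_pos hp1 hq
  have hρ2pos : 0 < ρ2 := hρ2 ▸ div_pos hp2 hq
  have hρ1q : ρ1 * q = p1 := by rw [hρ1]; field_simp
  have hρ2q : ρ2 * q = p2 := by rw [hρ2]; field_simp
  -- recurrence for ab
  have hrec : ∀ n, ab (n+1) 0 = ρ1 + ab n 0 * ρ1 + ab n 1 * (1+ρ1) ∧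
       ab (n+1) 1 = ρ2 + ab n 0 * ρ2 + ab n 1 * ρ2 := by
    intro n
    have h : (∑ i ∈ Finset.range (n+1), M ^ i) = (∑ i ∈ Finset.range n, M ^ i) * M + 1 := by
      rw [Finset.sum_range_succ']
      simp [pow_succ, Finset.sum_mul]
    rw [hab, hab n, h, hM]
    constructor <;>
    · simp [Matrix.vecMul, dotProduct, Fin.sum_univ_two, Matrix.mul_apply]
      ring
  have hab0 : ab 0 0 = 0 ∧ ab 0 1 = 0 := by
    rw [hab]; simp
  -- nonnegativity
  have hnn : ∀ n, 0 ≤ ab n 0 ∧ 0 ≤ ab n 1 := by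
    intro n
    induction n with
    | zero => rw [hab0.1, hab0.2]; exact ⟨le_refl 0, le_refl 0⟩
    | succ k ih =>
      rw [(hrec k).1, (hrec k).2]
      constructor <;> nlinarith [ih.1, ih.2]
  intro n hn
  induction n with
  | zero => omega
  | succ m ih =>
    intro s1 hs1 s2 hs2
    obtain ⟨hs1l, hs1r⟩ := hs1
    obtain ⟨hs2l, hs2r⟩ := hs2
    rcases Nat.eq_zero_or_pos m with hm | hm
    · subst hm
      rw [hf1, hab0.1, hab0.2, (hrec 0).1, (hrec 0).2, hab0.1, hab0.2]
      ring_nf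
    · -- inductive step
      have hD : 0 < 1 - p1 * s1 - p2 * s2 := by nlinarith
      have ht1 : g1 s1 s2 ∈ Set.Ico (0:ℝ) 1 := by
        rw [hg1]
        refine ⟨by positivity, ?_⟩
        rw [div_lt_one hD]; nlinarith
      have ht2 : g2 s1 s2 ∈ Set.Ico (0:ℝ) 1 := by
        rw [hg2]
        refine ⟨by positivity, ?_⟩
        rw [div_lt_one hD]; nlinarith
      have hIH := ih hm (g1 s1 s2) ht1 (g2 s1 s2) ht2
      rw [hfrec m hm s1 s2, hIH]
      have hmm : m - 1 + 1 = m := Nat.succ_pred_eq_of_pos hm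
      have hA' : ab m 0 = ρ1 + ab (m-1) 0 * ρ1 + ab (m-1) 1 * (1+ρ1) := by
        conv_lhs => rw [← hmm]
        exact (hrec (m-1)).1
      have hB' : ab m 1 = ρ2 + ab (m-1) 0 * ρ2 + ab (m-1) 1 * ρ2 := by
        conv_lhs => rw [← hmm]
        exact (hrec (m-1)).2
      -- key algebraic identity
      have key : ∀ a b : ℝ,
          1 + (1 - g1 s1 s2) * a + (1 - g2 s1 s2) * b
            = q * (1 + (1-s1) * (ρ1 + a*ρ1 + b*(1+ρ1)) + (1-s2) * (ρ2 + a*ρ2 + b*ρ2))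
                / (1 - p1*s1 - p2*s2) := by
        intro a b
        rw [hg1, hg2]
        have h : 1 + (1 - q/(1 - p1*s1 - p2*s2))*a + (1 - q*s1/(1 - p1*s1 - p2*s2))*b
            = ((1 - p1*s1 - p2*s2) + ((1 - p1*s1 - p2*s2) - q)*a
              + ((1 - p1*s1 - p2*s2) - q*s1)*b)/(1 - p1*s1 - p2*s2) := by
          field_simp
        rw [h, div_eq_div_iff hD.ne' hD.ne']
        linear_combination (1 - p1*s1 - p2*s2) * ((-(1+a+b))*hsum
          + (-(1-s1)*(1+a+b))*hρ1q + (-(1-s2)*(1+a+b))*hρ2q)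
      have e1 := key (ab (m-1) 0) (ab (m-1) 1)
      have e2 := key (ab m 0) (ab m 1)
      rw [← hA', ← hB'] at e1
      rw [← (hrec m).1, ← (hrec m).2] at e2
      simp only [Nat.add_sub_cancel]
      rw [e1, e2]
      have hden : (0:ℝ) < 1 + (1 - s1) * ab (m+1) 0 + (1 - s2) * ab (m+1) 1 := by
        nlinarith [mul_nonneg (by linarith : (0:ℝ) ≤ 1 - s1) (hnn (m+1)).1,
          mul_nonneg (by linarith : (0:ℝ) ≤ 1 - s2) (hnn (m+1)).2]
      rw [div_div_div_eq, div_eq_div_iff (by positivity) (by positivity)]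
      ring
end

section
/- Let $u = (\rho_1, \rho_2)$ with $\rho_i = p_i/q$ and let $v_N = (1 - e^{-2\lambda/N}, 1 - e^{-\lambda/N})^{\prime}$ for $\lambda > 0$. Under the symmetric condition, $N \cdot u M^{[Nx]-1} v_N \to \frac{2\lambda}{\sigma^2}$ as $N \to \infty$, for any fixed $x \in (0,1]$, where $\sigma^2 = 6q - 2$ and $M$ is the mean matrix with eigenvalues $1$ and $\alpha = (1-2q)/q$, $|\alpha| < 1$. -/
open Filter Real Matrix

lemma exp_lim_aux (c : ℝ) (hc : 0 < c) :
    Tendsto (fun N : ℕ => (N : ℝ) * (1 - Real.exp (-c / N))) atTop (nhds c) := by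
  have hd : HasDerivAt Real.exp 1 0 := by simpa using Real.hasDerivAt_exp 0
  have hs := hasDerivAt_iff_tendsto_slope.mp hd
  have h1 : Tendsto (fun N : ℕ => -c / (N : ℝ)) atTop (nhdsWithin 0 {(0:ℝ)}ᶜ) := by
    apply tendsto_nhdsWithin_of_tendsto_nhds_of_eventually_within
    · simpa using tendsto_const_nhds.div_atTop (tendsto_natCast_atTop_atTop (R := ℝ))
    · filter_upwards [eventually_ge_atTop 1] with N hN
      have hN0 : (0:ℝ) < N := by exact_mod_cast hN
      have : -c / (N : ℝ) < 0 := div_neg_of_neg_of_pos (by linarith) hN0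
      simp only [Set.mem_compl_iff, Set.mem_singleton_iff]
      linarith
  have h2 := hs.comp h1
  have h3 := h2.const_mul c
  simp only [Function.comp] at h3
  rw [mul_one] at h3
  apply h3.congr'
  filter_upwards [eventually_ge_atTop 1] with N hN
  have hN0 : (0:ℝ) < N := by exact_mod_cast hN
  have hne : -c / (N : ℝ) ≠ 0 := ne_of_lt (div_neg_of_neg_of_pos (by linarith) hN0)
  have hc0 : c ≠ 0 := ne_of_gt hc
  have hNne : (N : ℝ) ≠ 0 := ne_of_gt hN0
  rw [slope_def_field, Real.exp_zero, sub_zero]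
  rw [mul_div_assoc', div_eq_iff hne]
  field_simp
  ring

theorem stmt12 (p1 p2 q : ℝ) (hp1 : 0 < p1) (hp1' : p1 < 1) (hp2 : 0 < p2) (hp2' : p2 < 1)
    (hq : 0 < q) (hq' : q < 1) (hsum : p1 + p2 + q = 1) (hsym : p1 + 2 * p2 - q = 0)
    (hq3 : q ≠ 1 / 3)
    (M : Matrix (Fin 2) (Fin 2) ℝ)
    (hM : M = !![p1 / q, p2 / q; 1 + p1 / q, p2 / q])
    (σ2 : ℝ) (hσ : σ2 = 6 * q - 2)
    (lam : ℝ) (hlam : 0 < lam) (x : ℝ) (hx : x ∈ Set.Ioc (0:ℝ) 1) :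
    Tendsto (fun N : ℕ =>
        (N : ℝ) * (Matrix.vecMul ![p1 / q, p2 / q] (M ^ (⌊(N : ℝ) * x⌋₊ - 1)) ⬝ᵥ
          ![1 - Real.exp (-(2 * lam) / N), 1 - Real.exp (-lam / N)]))
      atTop (nhds (2 * lam / σ2)) := by
  have hp2v : p2 = 2 * q - 1 := by linarith
  have hp1v : p1 = 2 - 3 * q := by linarith
  have hqh : 1 / 2 < q := by linarith
  have hq23 : q < 2 / 3 := by linarith
  have hq0 : q ≠ 0 := ne_of_gt hq
  have h31 : 3 * q - 1 ≠ 0 := by intro h; linarith [(show q = 1/3 by linarith)]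
  set α : ℝ := (1 - 2 * q) / q with hα
  set L1 : ℝ := (1 - q) / (3 * q - 1) with hL1
  set L2 : ℝ := (2 * q - 1) / (3 * q - 1) with hL2
  set B : ℝ := (2 * q - 1) ^ 2 / (q * (3 * q - 1)) with hB
  -- closed form for the powers
  have hpow : ∀ n : ℕ, Matrix.vecMul ![p1 / q, p2 / q] (M ^ n) =
      ![L1 + (-2 * B) * α ^ n, L2 + B * α ^ n] := by
    intro n
    induction n with
    | zero =>
      funext j
      fin_cases j <;>
        simp [Matrix.vecMul, dotProduct, Fin.sum_univ_two, hp1v, hp2v, hL1, hL2, hB, hα] <;>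
        field_simp [show q * 3 - 1 ≠ 0 by intro h; apply h31; linarith] <;> ring
    | succ n ih =>
      rw [pow_succ, ← Matrix.vecMul_vecMul, ih]
      funext j
      fin_cases j <;>
        simp [Matrix.vecMul, dotProduct, Fin.sum_univ_two, hM, hp1v, hp2v, hL1, hL2, hB,
          hα, pow_succ] <;>
        field_simp <;> ring
  -- rewrite the function
  have key : ∀ N : ℕ, (N : ℝ) * (Matrix.vecMul ![p1 / q, p2 / q] (M ^ (⌊(N : ℝ) * x⌋₊ - 1)) ⬝ᵥ
          ![1 - Real.exp (-(2 * lam) / N), 1 - Real.exp (-lam / N)]) =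
      L1 * ((N : ℝ) * (1 - Real.exp (-(2 * lam) / N)))
        + L2 * ((N : ℝ) * (1 - Real.exp (-lam / N)))
        + α ^ (⌊(N : ℝ) * x⌋₊ - 1) *
            ((-2 * B) * ((N : ℝ) * (1 - Real.exp (-(2 * lam) / N)))
              + B * ((N : ℝ) * (1 - Real.exp (-lam / N)))) := by
    intro N
    rw [hpow]
    simp [dotProduct, Fin.sum_univ_two]
    ring
  have T1 : Tendsto (fun N : ℕ => (N : ℝ) * (1 - Real.exp (-(2 * lam) / N))) atTop
      (nhds (2 * lam)) := exp_lim_aux (2 * lam) (by linarith)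
  have T2 : Tendsto (fun N : ℕ => (N : ℝ) * (1 - Real.exp (-lam / N))) atTop (nhds lam) :=
    exp_lim_aux lam hlam
  have hm : Tendsto (fun N : ℕ => ⌊(N : ℝ) * x⌋₊ - 1) atTop atTop := by
    apply (tendsto_sub_atTop_nat 1).comp
    apply tendsto_nat_floor_atTop.comp
    exact Tendsto.atTop_mul_const hx.1 (tendsto_natCast_atTop_atTop (R := ℝ))
  have hαlt : |α| < 1 := by
    rw [abs_lt, hα]
    constructor
    · rw [lt_div_iff₀ hq]; linarith
    · rw [div_lt_one hq]; linarith
  have T3 : Tendsto (fun N : ℕ => α ^ (⌊(N : ℝ) * x⌋₊ - 1)) atTop (nhds 0) :=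
    (tendsto_pow_atTop_nhds_zero_of_abs_lt_one hαlt).comp hm
  have final : Tendsto (fun N : ℕ =>
      L1 * ((N : ℝ) * (1 - Real.exp (-(2 * lam) / N)))
        + L2 * ((N : ℝ) * (1 - Real.exp (-lam / N)))
        + α ^ (⌊(N : ℝ) * x⌋₊ - 1) *
            ((-2 * B) * ((N : ℝ) * (1 - Real.exp (-(2 * lam) / N)))
              + B * ((N : ℝ) * (1 - Real.exp (-lam / N))))) atTop
      (nhds (L1 * (2 * lam) + L2 * lam + 0 * ((-2 * B) * (2 * lam) + B * lam))) :=
    ((T1.const_mul L1).add (T2.const_mul L2)).add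
      (T3.mul ((T1.const_mul (-2 * B)).add (T2.const_mul B)))
  have heq : L1 * (2 * lam) + L2 * lam + 0 * ((-2 * B) * (2 * lam) + B * lam) = 2 * lam / σ2 := by
    rw [hσ, hL1, hL2]
    have h62 : 6 * q - 2 ≠ 0 := by intro h; linarith
    rw [show 6 * q - 2 = 2 * (3 * q - 1) by ring]
    field_simp
    ring
  rw [← heq]
  exact final.congr (fun N => (key N).symm)
end

section
/- Let $A_N(x) = (\rho_1,\rho_2)(M^{[Nx]-2} + \cdots + M + I) v_N$ where $v_N = (1-e^{-2\lambda/N},\ 1-e^{-\lambda/N})^{\prime}$. Under the symmetric condition, $A_N(x) \to \frac{2\lambda x}{\sigma^2}$ as $N \to \infty$ for each fixed $x \in (0,1]$ and $\lambda > 0$, where $\sigma^2 = 6q-2$. -/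
open Filter Real Matrix

lemma aux_exp13 (c : ℝ) (hc : 0 < c) :
    Tendsto (fun N : ℕ => (N:ℝ) * (1 - Real.exp (-c / N))) atTop (nhds c) := by
  have h1 : Tendsto (fun y : ℝ => (Real.exp y - 1)/y) (nhdsWithin 0 {(0:ℝ)}ᶜ) (nhds 1) := by
    have h := (Real.hasDerivAt_exp 0)
    rw [hasDerivAt_iff_tendsto_slope] at h
    simpa [slope_fun_def, Real.exp_zero, div_eq_inv_mul] using h
  have hφ : Tendsto (fun N : ℕ => -c/(N:ℝ)) atTop (nhdsWithin 0 {(0:ℝ)}ᶜ) := by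
    rw [tendsto_nhdsWithin_iff]
    constructor
    · exact Tendsto.div_atTop tendsto_const_nhds tendsto_natCast_atTop_atTop
    · filter_upwards [eventually_ge_atTop 1] with N hN
      have h0 : (0:ℝ) < N := by exact_mod_cast Nat.pos_of_ne_zero (by omega)
      have hlt : -c/(N:ℝ) < 0 := div_neg_of_neg_of_pos (by linarith) h0
      simp only [Set.mem_compl_iff, Set.mem_singleton_iff]
      intro h; rw [h] at hlt; linarith
  have h2 := (h1.comp hφ).const_mul c
  rw [mul_one] at h2
  refine h2.congr' ?_
  filter_upwards [eventually_ge_atTop 1] with N hN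
  have hN0 : (N:ℝ) ≠ 0 := by
    have : (0:ℝ) < N := by exact_mod_cast Nat.pos_of_ne_zero (by omega)
    linarith
  simp only [Function.comp]
  field_simp [hc.ne']
  ring

lemma aux_row13 (q : ℝ) (hq0 : q ≠ 0) (h31 : 3*q-1 ≠ 0) (k : ℕ) :
    Matrix.vecMul ![(2-3*q)/q, (2*q-1)/q]
      ((!![(2-3*q)/q, (2*q-1)/q; 1+(2-3*q)/q, (2*q-1)/q] : Matrix (Fin 2) (Fin 2) ℝ) ^ k)
    = ![ ((1-q)/q + ((1-2*q)/q)^k * (((2*q-1)/q) * ((2-3*q)/q - 1))) / ((3*q-1)/q),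
         ((2*q-1)/q + ((1-2*q)/q)^k * ((2*q-1)/q)^2) / ((3*q-1)/q) ] := by
  induction k with
  | zero =>
    funext i
    fin_cases i <;>
      simp [Matrix.vecMul, dotProduct, Fin.sum_univ_two] <;>
      · have h31b : q*3 - 1 ≠ 0 := by intro h; apply h31; linarith
        field_simp
        ring
  | succ k ih =>
    rw [pow_succ, ← Matrix.vecMul_vecMul, ih]
    funext i
    fin_cases i <;>
      simp [Matrix.vecMul, dotProduct, Fin.sum_univ_two, pow_succ] <;>
      · have h31b : q*3 - 1 ≠ 0 := by intro h; apply h31; linarith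
        field_simp
        ring

lemma aux_sum13 (q : ℝ) (hq0 : q ≠ 0) (h31 : 3*q-1 ≠ 0) (k : ℕ) :
    Matrix.vecMul ![(2-3*q)/q, (2*q-1)/q]
      (∑ i ∈ Finset.range k, (!![(2-3*q)/q, (2*q-1)/q; 1+(2-3*q)/q, (2*q-1)/q] : Matrix (Fin 2) (Fin 2) ℝ) ^ i)
    = ![ ((k:ℝ)*((1-q)/q) + (1-((1-2*q)/q)^k)/((3*q-1)/q) * (((2*q-1)/q) * ((2-3*q)/q - 1))) / ((3*q-1)/q),
         ((k:ℝ)*((2*q-1)/q) + (1-((1-2*q)/q)^k)/((3*q-1)/q) * ((2*q-1)/q)^2) / ((3*q-1)/q) ] := by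
  induction k with
  | zero =>
    funext i
    fin_cases i <;> simp [Matrix.vecMul]
  | succ k ih =>
    rw [Finset.sum_range_succ, Matrix.vecMul_add, ih, aux_row13 q hq0 h31]
    funext i
    fin_cases i <;>
      simp [Nat.cast_succ, pow_succ] <;>
      · have h31b : q*3 - 1 ≠ 0 := by intro h; apply h31; linarith
        field_simp
        ring

lemma aux_floor13 (x : ℝ) (hx0 : 0 < x) :
    Tendsto (fun N : ℕ => ((⌊(N:ℝ)*x⌋₊ - 1 : ℕ) : ℝ)/N) atTop (nhds x) := by
  have hlow : Tendsto (fun N : ℕ => x - 2/(N:ℝ)) atTop (nhds x) := by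
    have : Tendsto (fun N : ℕ => 2/(N:ℝ)) atTop (nhds 0) :=
      Tendsto.div_atTop tendsto_const_nhds tendsto_natCast_atTop_atTop
    simpa using tendsto_const_nhds.sub this
  refine tendsto_of_tendsto_of_tendsto_of_le_of_le' hlow tendsto_const_nhds ?_ ?_
  · filter_upwards [eventually_ge_atTop (⌈2/x⌉₊ + 1)] with N hN
    have hNpos : 0 < (N:ℝ) := by exact_mod_cast Nat.pos_of_ne_zero (by omega)
    have h2x : 2/x ≤ (N:ℝ) := by
      calc 2/x ≤ ⌈2/x⌉₊ := Nat.le_ceil _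
      _ ≤ (N:ℝ) := by exact_mod_cast Nat.le_of_succ_le hN
    have hNx2 : (2:ℝ) ≤ (N:ℝ)*x := by
      rw [div_le_iff₀ hx0] at h2x; linarith
    have hfl2 : 2 ≤ ⌊(N:ℝ)*x⌋₊ := Nat.le_floor (by exact_mod_cast hNx2)
    have hcast : ((⌊(N:ℝ)*x⌋₊ - 1 : ℕ) : ℝ) = (⌊(N:ℝ)*x⌋₊ : ℝ) - 1 := by
      rw [Nat.cast_sub (by omega)]; norm_num
    have hub : (N:ℝ)*x < ⌊(N:ℝ)*x⌋₊ + 1 := Nat.lt_floor_add_one _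
    rw [hcast, le_div_iff₀ hNpos]
    have : x - 2/(N:ℝ) = (x*N - 2)/N := by field_simp
    rw [this, div_mul_cancel₀ _ (ne_of_gt hNpos)]
    nlinarith
  · filter_upwards [eventually_ge_atTop 1] with N hN
    have hNpos : 0 < (N:ℝ) := by exact_mod_cast Nat.pos_of_ne_zero (by omega)
    have hcast : ((⌊(N:ℝ)*x⌋₊ - 1 : ℕ) : ℝ) ≤ (⌊(N:ℝ)*x⌋₊ : ℝ) := by
      exact_mod_cast Nat.sub_le _ _
    have hfl : (⌊(N:ℝ)*x⌋₊ : ℝ) ≤ (N:ℝ)*x := Nat.floor_le (by positivity)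
    rw [div_le_iff₀ hNpos]
    nlinarith

theorem stmt13 (p1 p2 q : ℝ) (hp1 : 0 < p1) (hp1' : p1 < 1) (hp2 : 0 < p2) (hp2' : p2 < 1)
    (hq : 0 < q) (hq' : q < 1) (hsum : p1 + p2 + q = 1) (hsym : p1 + 2 * p2 - q = 0)
    (hq3 : q ≠ 1 / 3)
    (M : Matrix (Fin 2) (Fin 2) ℝ)
    (hM : M = !![p1 / q, p2 / q; 1 + p1 / q, p2 / q])
    (σ2 : ℝ) (hσ : σ2 = 6 * q - 2)
    (lam : ℝ) (hlam : 0 < lam) (x : ℝ) (hx : x ∈ Set.Ioc (0:ℝ) 1) :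
    Tendsto (fun N : ℕ =>
        Matrix.vecMul ![p1 / q, p2 / q]
            (∑ i ∈ Finset.range (⌊(N : ℝ) * x⌋₊ - 1), M ^ i) ⬝ᵥ
          ![1 - Real.exp (-(2 * lam) / N), 1 - Real.exp (-lam / N)])
      atTop (nhds (2 * lam * x / σ2)) := by
  obtain ⟨hx0, hx1⟩ := hx
  have hp2e : p2 = 2*q - 1 := by linarith
  have hp1e : p1 = 2 - 3*q := by linarith
  subst hp2e hp1e hM hσ
  have hq0 : q ≠ 0 := ne_of_gt hq
  have hqh : 1/2 < q := by linarith
  have hq23 : q < 2/3 := by linarith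
  have h31 : 3*q - 1 ≠ 0 := by intro h; nlinarith
  have h31' : (0:ℝ) < 3*q - 1 := by linarith
  -- abbreviations
  set s : ℝ := (1-q)/q with hs
  set ρ2 : ℝ := (2*q-1)/q with hρ2
  set α : ℝ := (1-2*q)/q with hα
  set C : ℝ := (3*q-1)/q with hC
  set d1 : ℝ := ((2*q-1)/q) * ((2-3*q)/q - 1) with hd1
  set d2 : ℝ := ((2*q-1)/q)^2 with hd2
  have hC0 : C ≠ 0 := by rw [hC]; positivity
  have hCpos : 0 < C := by rw [hC]; positivity
  have hαabs : |α| ≤ 1 := by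
    rw [hα, abs_div, abs_of_pos hq, div_le_one hq, abs_le]; constructor <;> linarith
  set k : ℕ → ℕ := fun N => ⌊(N:ℝ)*x⌋₊ - 1 with hk
  -- the limit of the nice form
  have T1 : Tendsto (fun N : ℕ => ((k N : ℕ):ℝ)/N) atTop (nhds x) := aux_floor13 x hx0
  have T2 : Tendsto (fun N : ℕ => (N:ℝ) * (1 - Real.exp (-(2*lam) / N))) atTop (nhds (2*lam)) :=
    aux_exp13 (2*lam) (by linarith)
  have T3 : Tendsto (fun N : ℕ => (N:ℝ) * (1 - Real.exp (-lam / N))) atTop (nhds lam) :=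
    aux_exp13 lam hlam
  have He : Tendsto (fun N : ℕ => (d1 * (1 - Real.exp (-(2*lam) / N)) + d2 * (1 - Real.exp (-lam / N))) / C)
      atTop (nhds 0) := by
    have e1 : Tendsto (fun N : ℕ => (1 - Real.exp (-(2*lam) / N))) atTop (nhds 0) := by
      have h0 : Tendsto (fun N : ℕ => -(2*lam)/(N:ℝ)) atTop (nhds 0) :=
        Tendsto.div_atTop tendsto_const_nhds tendsto_natCast_atTop_atTop
      have h1 : Tendsto (fun N : ℕ => Real.exp (-(2*lam)/(N:ℝ))) atTop (nhds 1) := by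
        have := (Real.continuous_exp.tendsto 0).comp h0
        simpa [Function.comp_def] using this
      simpa using h1.const_sub 1
    have e2 : Tendsto (fun N : ℕ => (1 - Real.exp (-lam / N))) atTop (nhds 0) := by
      have h0 : Tendsto (fun N : ℕ => -lam/(N:ℝ)) atTop (nhds 0) :=
        Tendsto.div_atTop tendsto_const_nhds tendsto_natCast_atTop_atTop
      have h1 : Tendsto (fun N : ℕ => Real.exp (-lam/(N:ℝ))) atTop (nhds 1) := by
        have := (Real.continuous_exp.tendsto 0).comp h0
        simpa [Function.comp_def] using this
      simpa using h1.const_sub 1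
    have := ((e1.const_mul d1).add (e2.const_mul d2)).div_const C
    simpa using this
  have T4 : Tendsto (fun N : ℕ =>
      (1 - α^(k N)) * ((d1 * (1 - Real.exp (-(2*lam) / N)) + d2 * (1 - Real.exp (-lam / N))) / C))
      atTop (nhds 0) := by
    refine squeeze_zero_norm (a := fun N : ℕ => 2 * ‖(d1 * (1 - Real.exp (-(2*lam) / N)) + d2 * (1 - Real.exp (-lam / N))) / C‖) ?_ ?_
    · intro n
      rw [norm_mul]
      have hb : ‖1 - α^(k n)‖ ≤ 2 := by
        have h1 : |α^(k n)| ≤ 1 := by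
          rw [abs_pow]; exact pow_le_one₀ (abs_nonneg _) hαabs
        rw [Real.norm_eq_abs]
        calc |1 - α^(k n)| ≤ |(1:ℝ)| + |α^(k n)| := abs_sub _ _
        _ ≤ 2 := by rw [abs_one]; linarith
      have := norm_nonneg ((d1 * (1 - Real.exp (-(2*lam) / n)) + d2 * (1 - Real.exp (-lam / n))) / C)
      nlinarith
    · simpa using He.norm.const_mul 2
  have Tg : Tendsto (fun N : ℕ =>
      (((k N : ℕ):ℝ)/N * (((N:ℝ) * (1 - Real.exp (-(2*lam) / N))) * s + ((N:ℝ) * (1 - Real.exp (-lam / N))) * ρ2)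
        + (1 - α^(k N)) * ((d1 * (1 - Real.exp (-(2*lam) / N)) + d2 * (1 - Real.exp (-lam / N))) / C)) / C)
      atTop (nhds ((x * ((2*lam) * s + lam * ρ2) + 0) / C)) :=
    ((T1.mul ((T2.mul_const s).add (T3.mul_const ρ2))).add T4).div_const C
  have hval : (x * ((2*lam) * s + lam * ρ2) + 0) / C = 2 * lam * x / (6*q - 2) := by
    have h62 : 6*q - 2 ≠ 0 := by intro h; apply h31; linarith
    rw [hs, hρ2, hC]
    have h31b : q*3 - 1 ≠ 0 := by intro h; apply h31; linarith
    have h62b : q*6 - 2 ≠ 0 := by intro h; apply h31; linarith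
    field_simp
    ring
  rw [hval] at Tg
  refine Tg.congr' ?_
  filter_upwards [eventually_ge_atTop 1] with N hN
  have hN0 : (N:ℝ) ≠ 0 := by
    have : (0:ℝ) < N := by exact_mod_cast Nat.pos_of_ne_zero (by omega)
    linarith
  rw [aux_sum13 q hq0 h31 (⌊(N:ℝ)*x⌋₊ - 1)]
  simp only [dotProduct, Fin.sum_univ_two, Matrix.cons_val_zero, Matrix.cons_val_one,
    Matrix.head_cons]
  simp only [hk, hs, hρ2, hα, hC, hd1, hd2]
  field_simp
  ring
end
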